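/- arXiv:2003.12815 — 3 statements merged into one kernel-verified Lean document; each statement's English description precedes it below -/
import Mathlib

section
/- Let W = e_c 1^T + E_s Γ̂^T = w_c 1^T + W_s Γ^T be a rank-(k+1) matrix in R^{m×D}, where E_s ∈ R^{m×k}, Γ̂ ∈ R^{D×k}, W_s ∈ R^{m×k}, Γ ∈ R^{D×k} are all rank-k matrices with k < m and k < D. If w_c is orthogonal to the column span of W_s, then w_c = e_c - P_{E_s} e_c, where P_{E_s} is the orthogonal projection onto the column span of E_s. -/
open Matrix

lemma aux_vecMulVec_mul {m D k : ℕ} (a : Fin m → ℝ) (c : Fin k → ℝ)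
    (M : Matrix (Fin D) (Fin k) ℝ) :
    vecMulVec a (M *ᵥ c) = vecMulVec a c * Mᵀ := by
  ext i j
  simp [vecMulVec_apply, mul_apply, mulVec, dotProduct, Finset.mul_sum]
  congr 1; ext l; ring

lemma aux_rank {m D k : ℕ} (a : Fin m → ℝ) (c : Fin k → ℝ)
    (B : Matrix (Fin m) (Fin k) ℝ) (M : Matrix (Fin D) (Fin k) ℝ)
    (W : Matrix (Fin m) (Fin D) ℝ)
    (hone : (fun _ => (1:ℝ)) = M *ᵥ c)
    (hW : W = vecMulVec a (fun _ => (1:ℝ)) + B * Mᵀ)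
    (hrM : M.rank = k) (hrW : W.rank = k + 1) : False := by
  have hW' : W = (vecMulVec a c + B) * Mᵀ := by
    rw [hW, Matrix.add_mul, ← aux_vecMulVec_mul, ← hone]
  have h := Matrix.rank_mul_le_right (vecMulVec a c + B) Mᵀ
  rw [← hW', Matrix.rank_transpose, hrM, hrW] at h
  omega

lemma aux_inj {D k : ℕ} (M : Matrix (Fin D) (Fin k) ℝ) (hr : M.rank = k) :
    Function.Injective M.mulVecLin := by
  rw [← LinearMap.ker_eq_bot]
  have h1 := LinearMap.finrank_range_add_finrank_ker M.mulVecLin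
  rw [show Module.finrank ℝ (LinearMap.range M.mulVecLin) = M.rank from rfl, hr,
    Module.finrank_fin_fun] at h1
  exact Submodule.finrank_eq_zero.mp (by omega)

lemma aux_surj {D k : ℕ} (M : Matrix (Fin k) (Fin D) ℝ) (hr : M.rank = k) :
    LinearMap.range M.mulVecLin = ⊤ := by
  apply Submodule.eq_top_of_finrank_eq
  rw [show Module.finrank ℝ (LinearMap.range M.mulVecLin) = M.rank from rfl, hr,
    Module.finrank_fin_fun]

lemma aux_ones {D k : ℕ} (M : Matrix (Fin D) (Fin k) ℝ) (hr : M.rank = k)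
    (h : ∀ x : Fin D → ℝ, Mᵀ *ᵥ x = 0 → ∑ j, x j = 0) :
    ∃ c : Fin k → ℝ, (fun _ => (1:ℝ)) = M *ᵥ c := by
  have hsurj : LinearMap.range Mᵀ.mulVecLin = ⊤ :=
    aux_surj Mᵀ (by rw [Matrix.rank_transpose, hr])
  obtain ⟨g, hg⟩ := Mᵀ.mulVecLin.exists_rightInverse_of_surjective hsurj
  refine ⟨fun j => ∑ i, g (Pi.single j 1) i, ?_⟩
  have hfact : ∀ x : Fin D → ℝ, ∑ j, x j = ∑ i, g (Mᵀ.mulVecLin x) i := by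
    intro x
    have hker : Mᵀ *ᵥ (x - g (Mᵀ.mulVecLin x)) = 0 := by
      have h2 : Mᵀ.mulVecLin (g (Mᵀ.mulVecLin x)) = Mᵀ.mulVecLin x := by
        have := congrFun (congrArg DFunLike.coe hg) (Mᵀ.mulVecLin x)
        simpa using this
      have h3 : Mᵀ.mulVecLin (x - g (Mᵀ.mulVecLin x)) = 0 := by
        rw [map_sub, h2, sub_self]
      rwa [Matrix.mulVecLin_apply] at h3
    have h4 := h _ hker
    simp only [Pi.sub_apply, Finset.sum_sub_distrib] at h4
    linarith
  funext i
  have h5 := hfact (Pi.single i 1)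
  have h6 : Mᵀ.mulVecLin (Pi.single i 1) = fun j => M i j := by
    simp [Matrix.mulVecLin_apply, Matrix.mulVec_single_one]
    rfl
  rw [h6] at h5
  have h7 : (fun j => M i j) = ∑ j : Fin k, M i j • (Pi.single j 1 : Fin k → ℝ) := by
    funext l
    simp [Finset.sum_apply, Pi.single_apply, Finset.sum_ite_eq']
  have h8 : g (fun j => M i j) = ∑ j : Fin k, M i j • g (Pi.single j 1) := by
    rw [h7, map_sum]
    simp [_root_.map_smul]
  rw [h8] at h5
  simp only [Finset.sum_apply, Pi.smul_apply, smul_eq_mul, Pi.single_apply] at h5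
  simp only [Matrix.mulVec, dotProduct]
  rw [Finset.sum_comm] at h5
  simp only [Finset.mul_sum]
  simpa using h5

lemma aux_vmv_mulVec {m D : ℕ} (a : Fin m → ℝ) (b : Fin D → ℝ) (x : Fin D → ℝ) :
    vecMulVec a b *ᵥ x = (b ⬝ᵥ x) • a := by
  funext i
  simp [Matrix.mulVec, vecMulVec_apply, dotProduct, Finset.sum_mul, Finset.mul_sum]
  congr 1; ext j; ring

/-- If `W = e_c 1ᵀ + E_s Γ̂ᵀ = w_c 1ᵀ + W_s Γᵀ` is rank `k+1` with all
factors of rank `k`, `k < m`, `k < D`, and `w_c ⊥ Span(W_s)` (i.e. `W_sᵀ w_c = 0`),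
then `w_c = e_c - P_{E_s} e_c`, i.e. `w_c ⊥ Span(E_s)` and `e_c - w_c ∈ Span(E_s)`. -/
theorem stmt0 {m D k : ℕ} (hkm : k < m) (hkD : k < D)
    (e_c w_c : Fin m → ℝ)
    (E_s W_s : Matrix (Fin m) (Fin k) ℝ)
    (Γhat Γ : Matrix (Fin D) (Fin k) ℝ)
    (W : Matrix (Fin m) (Fin D) ℝ)
    (hW1 : W = vecMulVec e_c (fun _ => (1 : ℝ)) + E_s * Γhatᵀ)
    (hW2 : W = vecMulVec w_c (fun _ => (1 : ℝ)) + W_s * Γᵀ)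
    (hrW : W.rank = k + 1)
    (hrE : E_s.rank = k) (hrΓhat : Γhat.rank = k)
    (hrWs : W_s.rank = k) (hrΓ : Γ.rank = k)
    (horth : W_sᵀ *ᵥ w_c = 0) :
    E_sᵀ *ᵥ w_c = 0 ∧ e_c - w_c ∈ Submodule.span ℝ (Set.range E_sᵀ) := by
  classical
  have heq : vecMulVec e_c (fun _ => (1:ℝ)) + E_s * Γhatᵀ
      = vecMulVec w_c (fun _ => (1:ℝ)) + W_s * Γᵀ := hW1.symm.trans hW2
  set u : Fin k → ℝ := E_sᵀ *ᵥ w_c with hu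
  -- part 1
  have hvm : ∀ (a : Fin m → ℝ),
      w_c ᵥ* vecMulVec a (fun _ : Fin D => (1:ℝ)) = (w_c ⬝ᵥ a) • (fun _ : Fin D => (1:ℝ)) := by
    intro a; funext j
    simp [Matrix.vecMul, vecMulVec_apply, dotProduct]
  have hE : w_c ᵥ* (E_s * Γhatᵀ) = Γhat *ᵥ u := by
    rw [← Matrix.vecMul_vecMul]
    rw [show w_c ᵥ* E_s = u by rw [hu, ← Matrix.vecMul_transpose, transpose_transpose]]
    rw [Matrix.vecMul_transpose]
  have hWsz : w_c ᵥ* (W_s * Γᵀ) = 0 := by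
    rw [← Matrix.vecMul_vecMul]
    rw [show w_c ᵥ* W_s = 0 by rw [← Matrix.vecMul_transpose, transpose_transpose] at horth; exact horth]
    exact Matrix.zero_vecMul _
  have key : (w_c ⬝ᵥ e_c) • (fun _ => (1:ℝ)) + Γhat *ᵥ u
      = (w_c ⬝ᵥ w_c) • (fun _ => (1:ℝ)) := by
    have h0 := congrArg (fun X => w_c ᵥ* X) heq
    simp only [Matrix.vecMul_add, hvm, hE, hWsz, add_zero] at h0
    exact h0
  set α : ℝ := w_c ⬝ᵥ w_c - w_c ⬝ᵥ e_c with hα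
  have hαu : Γhat *ᵥ u = α • (fun _ => (1:ℝ)) := by
    funext j
    have h1 := congrFun key j
    simp only [Pi.add_apply, Pi.smul_apply, smul_eq_mul, mul_one] at h1
    simp only [Pi.smul_apply, smul_eq_mul, mul_one, hα]
    linarith
  have hα0 : α = 0 := by
    by_contra hne
    refine aux_rank e_c (α⁻¹ • u) E_s Γhat W ?_ hW1 hrΓhat hrW
    rw [Matrix.mulVec_smul, hαu, smul_smul, inv_mul_cancel₀ hne, one_smul]
  have part1 : u = 0 := by
    apply aux_inj Γhat hrΓhat
    rw [Matrix.mulVecLin_apply, Matrix.mulVecLin_apply, hαu, hα0, zero_smul, Matrix.mulVec_zero]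
  refine ⟨part1, ?_⟩
  -- part 2
  have hx : ∃ x : Fin D → ℝ, Γᵀ *ᵥ x = 0 ∧ ∑ j, x j ≠ 0 := by
    by_contra hcon
    push_neg at hcon
    obtain ⟨c, hc⟩ := aux_ones Γ hrΓ hcon
    exact aux_rank w_c c W_s Γ W hc hW2 hrΓ hrW
  obtain ⟨x, hx0, hxs⟩ := hx
  set x' : Fin D → ℝ := (∑ j, x j)⁻¹ • x with hx'
  have hsum : (fun _ => (1:ℝ)) ⬝ᵥ x' = 1 := by
    simp only [hx', dotProduct, Pi.smul_apply, smul_eq_mul, one_mul, ← Finset.mul_sum]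
    exact inv_mul_cancel₀ hxs
  have h0' : Γᵀ *ᵥ x' = 0 := by
    rw [hx', Matrix.mulVec_smul, hx0, smul_zero]
  have happ := congrArg (fun X => X *ᵥ x') heq
  simp only [Matrix.add_mulVec, ← Matrix.mulVec_mulVec, aux_vmv_mulVec, hsum, one_smul,
    h0', Matrix.mulVec_zero, add_zero] at happ
  have : e_c - w_c = E_s *ᵥ (-(Γhatᵀ *ᵥ x')) := by
    rw [Matrix.mulVec_neg]
    funext i
    have := congrFun happ i
    simp only [Pi.add_apply, Pi.sub_apply, Pi.neg_apply] at this ⊢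
    linarith
  rw [show Set.range E_sᵀ = Set.range E_s.col from rfl, ← Matrix.range_mulVecLin]
  exact ⟨-(Γhatᵀ *ᵥ x'), this.symm⟩
end

section
/- Let W ∈ R^{m×D}, w̃ = (1/D) W 1, and let σ̃_1 ≥ σ̃_2 ≥ ... denote the singular values of W - w̃ 1^T. Then for every matrix W̃ ∈ R^{m×D} with rank(W̃) ≤ k+1 and 1 ∈ Span(W̃^T), the operator norm satisfies ||W - W̃||_2 ≥ σ̃_{k+1}. -/
open Matrix

lemma helper_sum_mulVec {a b : ℕ} {ι : Type*} [Fintype ι] (M : ι → Matrix (Fin a) (Fin b) ℝ)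
    (x : Fin b → ℝ) : (∑ i, M i) *ᵥ x = ∑ i, M i *ᵥ x := by
  ext j
  simp [mulVec, dotProduct, Finset.sum_apply, Matrix.sum_apply, Finset.sum_mul]
  rw [Finset.sum_comm]

lemma helper_vecMulVec_mulVec {a b : ℕ} (p : Fin a → ℝ) (q x : Fin b → ℝ) :
    vecMulVec p q *ᵥ x = (dotProduct q x) • p := by
  ext i
  simp [vecMulVec, mulVec, dotProduct, Finset.mul_sum, Finset.sum_mul, mul_comm, mul_assoc,
    mul_left_comm]

lemma helper_dot_sum {n : ℕ} {ι : Type*} [Fintype ι] (x : Fin n → ℝ) (f : ι → Fin n → ℝ) :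
    dotProduct x (∑ i, f i) = ∑ i, dotProduct x (f i) := by
  simp only [dotProduct, Finset.sum_apply, Finset.mul_sum]
  exact Finset.sum_comm

lemma helper_sum_dot {n : ℕ} {ι : Type*} [Fintype ι] (x : Fin n → ℝ) (f : ι → Fin n → ℝ) :
    dotProduct (∑ i, f i) x = ∑ i, dotProduct (f i) x := by
  simp only [dotProduct, Finset.sum_apply, Finset.sum_mul]
  exact Finset.sum_comm

lemma helper_linIndep {n : ℕ} {ι : Type*} [Fintype ι] [DecidableEq ι] (y : ι → (Fin n → ℝ))
    (h : ∀ i j, dotProduct (y i) (y j) = if i = j then 1 else 0) :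
    LinearIndependent ℝ y := by
  rw [Fintype.linearIndependent_iff]
  intro g hg i
  have h2 := congrArg (fun z => dotProduct (y i) z) hg
  simp only [helper_dot_sum, dotProduct_smul, h, smul_eq_mul, mul_ite, mul_one, mul_zero,
    Finset.sum_ite_eq', Finset.sum_ite_eq, Finset.mem_univ, if_true, dotProduct_zero] at h2
  exact h2

lemma helper_dot_sum_sum {n : ℕ} {ι : Type*} [Fintype ι] [DecidableEq ι]
    (w : ι → Fin n → ℝ) (hw : ∀ i j, dotProduct (w i) (w j) = if i = j then 1 else 0)
    (a b : ι → ℝ) :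
    dotProduct (∑ i, a i • w i) (∑ j, b j • w j) = ∑ i, a i * b i := by
  rw [helper_sum_dot]
  refine Finset.sum_congr rfl fun i _ => ?_
  rw [helper_dot_sum]
  simp [smul_dotProduct, dotProduct_smul, hw, mul_ite, Finset.sum_ite_eq', Finset.sum_ite_eq,
    mul_comm]

lemma helper_dot_self_pos {n : ℕ} {z : Fin n → ℝ} (hz : z ≠ 0) : 0 < dotProduct z z := by
  rcases lt_or_eq_of_le (Finset.sum_nonneg fun i _ => mul_self_nonneg (z i)) with h | h
  · exact h
  · exact absurd (dotProduct_self_eq_zero.mp h.symm) hz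

/-- Let `w̃ = (1/D) W 1` and let `σ₁ ≥ σ₂ ≥ ... ≥ 0` be the singular
values of `A = W - w̃ 1ᵀ`, given through a full SVD `A = Σᵢ σᵢ uᵢ vᵢᵀ` with
orthonormal `u`, `v` (indexed by `Fin (min m D)`). Then for every `W̃` of rank at
most `k+1` whose row space contains the all-ones vector, the operator norm of
`W - W̃` is at least `σ_{k+1}` (index `k` in 0-based counting): there is a unit
vector `x` with `‖(W - W̃) x‖ ≥ σ_{k+1}`. -/
theorem stmt5 {m D k : ℕ} (hD : 0 < D) (hk : k < min m D)
    (W : Matrix (Fin m) (Fin D) ℝ)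
    (σ : Fin (min m D) → ℝ)
    (u : Fin (min m D) → (Fin m → ℝ)) (v : Fin (min m D) → (Fin D → ℝ))
    (hu : ∀ i j, dotProduct (u i) (u j) = if i = j then 1 else 0)
    (hv : ∀ i j, dotProduct (v i) (v j) = if i = j then 1 else 0)
    (hσsort : ∀ i j, i ≤ j → σ j ≤ σ i) (hσnn : ∀ i, 0 ≤ σ i)
    (hSVD : W - vecMulVec ((D : ℝ)⁻¹ • (W *ᵥ fun _ => (1 : ℝ))) (fun _ => (1 : ℝ))
            = ∑ i, σ i • vecMulVec (u i) (v i)) :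
    ∀ Wt : Matrix (Fin m) (Fin D) ℝ, Wt.rank ≤ k + 1 →
      (fun _ => (1 : ℝ)) ∈ Submodule.span ℝ (Set.range Wt) →
      ∃ x : Fin D → ℝ, dotProduct x x = 1 ∧
        σ ⟨k, hk⟩ ≤ Real.sqrt (dotProduct ((W - Wt) *ᵥ x) ((W - Wt) *ᵥ x)) := by
  intro Wt hrank hone
  by_cases hσk : σ ⟨k, hk⟩ ≤ 0
  · refine ⟨Pi.single ⟨0, hD⟩ 1, ?_, le_trans hσk (Real.sqrt_nonneg _)⟩
    simp [dotProduct, Pi.single_apply]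
  push_neg at hσk
  set one : Fin D → ℝ := (fun _ => (1 : ℝ)) with hone_def
  set w : Fin m → ℝ := (D : ℝ)⁻¹ • (W *ᵥ one) with hw_def
  have hDne : (D : ℝ) ≠ 0 := Nat.cast_ne_zero.mpr hD.ne'
  have honeone : dotProduct one one = (D : ℝ) := by
    simp [dotProduct, hone_def]
  -- A *ᵥ one = 0
  have hA1 : (W - vecMulVec w one) *ᵥ one = 0 := by
    rw [sub_mulVec, helper_vecMulVec_mulVec, honeone, hw_def, smul_smul,
      mul_inv_cancel₀ hDne, one_smul, sub_self]
  -- rewrite via SVD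
  have hA1' : (∑ i, (σ i * dotProduct (v i) one) • u i) = 0 := by
    rw [hSVD] at hA1
    rw [helper_sum_mulVec] at hA1
    rw [← hA1]
    refine Finset.sum_congr rfl fun i _ => ?_
    rw [smul_mulVec, helper_vecMulVec_mulVec, smul_smul]
  have hv_one : ∀ j : Fin (min m D), (j : ℕ) ≤ k → dotProduct (v j) one = 0 := by
    intro j hj
    have hσj : 0 < σ j := lt_of_lt_of_le hσk (hσsort j ⟨k, hk⟩ hj)
    have h2 := congrArg (fun z => dotProduct (u j) z) hA1'
    simp only [helper_dot_sum, dotProduct_smul, smul_eq_mul, dotProduct_zero] at h2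
    have h3 : ∀ i : Fin (min m D),
        σ i * dotProduct (v i) one * dotProduct (u j) (u i)
        = if j = i then σ i * dotProduct (v i) one else 0 := by
      intro i; rw [hu]
      by_cases h : j = i
      · simp [h]
      · rw [if_neg h, if_neg h, mul_zero]
    rw [Finset.sum_congr rfl (fun i _ => h3 i), Finset.sum_ite_eq] at h2
    simp only [Finset.mem_univ, if_true] at h2
    rcases mul_eq_zero.mp h2 with h | h
    · exact absurd h hσj.ne'
    · exact h
  -- the embedding of Fin (k+1)
  set e : Fin (k + 1) → Fin (min m D) :=
    fun i => ⟨i.1, lt_of_le_of_lt (Nat.lt_succ_iff.mp i.2) hk⟩ with he_def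
  have he_inj : Function.Injective e := by
    intro i j hij
    simp only [he_def, Fin.mk.injEq] at hij
    exact Fin.ext hij
  have hve : ∀ i : Fin (k + 1), dotProduct (v (e i)) one = 0 :=
    fun i => hv_one (e i) (Nat.lt_succ_iff.mp i.2)
  have hve' : ∀ i j : Fin (k + 1),
      dotProduct (v (e i)) (v (e j)) = if i = j then 1 else 0 := by
    intro i j
    rw [hv]
    by_cases h : i = j
    · simp [h]
    · rw [if_neg (fun hh => h (he_inj hh)), if_neg h]
  have hDsqrt : (0 : ℝ) < Real.sqrt D := Real.sqrt_pos.mpr (by positivity)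
  -- the family y
  set y : Fin (k + 2) → (Fin D → ℝ) :=
    fun i => if h : (i : ℕ) < k + 1
      then v ⟨i, lt_of_le_of_lt (Nat.lt_succ_iff.mp h) hk⟩
      else (Real.sqrt D)⁻¹ • one with hy_def
  have hy_lt : ∀ (i : Fin (k + 2)) (h : (i : ℕ) < k + 1), y i = v (e ⟨i, h⟩) := by
    intro i h; simp only [hy_def, dif_pos h]; rfl
  have hy_last : ∀ (i : Fin (k + 2)), ¬ (i : ℕ) < k + 1 → y i = (Real.sqrt D)⁻¹ • one := by
    intro i h; simp only [hy_def, dif_neg h]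
  have hy : ∀ i j, dotProduct (y i) (y j) = if i = j then 1 else 0 := by
    intro i j
    by_cases hi : (i : ℕ) < k + 1 <;> by_cases hj : (j : ℕ) < k + 1
    · rw [hy_lt i hi, hy_lt j hj, hve']
      by_cases h : i = j
      · simp [h]
      · have h' : (⟨i, hi⟩ : Fin (k+1)) ≠ ⟨j, hj⟩ := by
          intro hh
          simp only [Fin.mk.injEq] at hh
          exact h (Fin.ext hh)
        rw [if_neg h', if_neg h]
    · have h' : i ≠ j := by intro hh; subst hh; exact hj hi
      rw [hy_lt i hi, hy_last j hj, dotProduct_smul, hve ⟨i, hi⟩, if_neg h', smul_zero]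
    · have h' : i ≠ j := by intro hh; subst hh; exact hi hj
      rw [hy_last i hi, hy_lt j hj, smul_dotProduct, dotProduct_comm, hve ⟨j, hj⟩,
        if_neg h', smul_zero]
    · have hij : i = j := by
        have h1 : (i : ℕ) = k + 1 := le_antisymm (Nat.lt_succ_iff.mp i.2) (Nat.le_of_not_lt hi)
        have h2 : (j : ℕ) = k + 1 := le_antisymm (Nat.lt_succ_iff.mp j.2) (Nat.le_of_not_lt hj)
        exact Fin.ext (h1.trans h2.symm)
      rw [hy_last i hi, hy_last j hj, dotProduct_smul, smul_dotProduct, honeone, if_pos hij,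
        smul_eq_mul, smul_eq_mul, ← mul_assoc, ← Real.sqrt_inv,
        Real.mul_self_sqrt (by positivity), inv_mul_cancel₀ hDne]
  have hli : LinearIndependent ℝ y := helper_linIndep y hy
  set V' : Submodule ℝ (Fin D → ℝ) := Submodule.span ℝ (Set.range y) with hV'_def
  have hV'rank : Module.finrank ℝ V' = k + 2 := by
    rw [hV'_def, finrank_span_eq_card hli, Fintype.card_fin]
  set K : Submodule ℝ (Fin D → ℝ) := LinearMap.ker (Matrix.mulVecLin Wt) with hK_def
  have hKrank : Wt.rank + Module.finrank ℝ K = D := by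
    rw [Matrix.rank, hK_def]
    rw [LinearMap.finrank_range_add_finrank_ker (Matrix.mulVecLin Wt)]
    simp
  have hsup : Module.finrank ℝ ↥(K ⊔ V') ≤ D := by
    have := Submodule.finrank_le (K ⊔ V')
    simpa using this
  have hinf : 0 < Module.finrank ℝ ↥(K ⊓ V') := by
    have := Submodule.finrank_sup_add_finrank_inf_eq K V'
    omega
  have hne : K ⊓ V' ≠ ⊥ := by
    intro hbot
    rw [hbot, finrank_bot] at hinf
    exact lt_irrefl 0 hinf
  obtain ⟨z, hzmem, hz0⟩ := Submodule.exists_mem_ne_zero_of_ne_bot hne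
  have hzK : Wt *ᵥ z = 0 := by
    have h1 := hzmem.1
    rw [hK_def] at h1
    simpa using h1
  have hzV : z ∈ V' := hzmem.2
  rw [hV'_def] at hzV
  obtain ⟨c, hc⟩ := (Submodule.mem_span_range_iff_exists_fun ℝ).mp hzV
  -- one ⬝ z = 0
  have honez : dotProduct one z = 0 := by
    have hspan : ∀ r ∈ Submodule.span ℝ (Set.range Wt), dotProduct r z = 0 := by
      intro r hr
      induction hr using Submodule.span_induction with
      | mem x hx =>
        obtain ⟨i, rfl⟩ := hx
        exact congrFun hzK i
      | zero => simp
      | add x y' _ _ hx hy' => rw [add_dotProduct, hx, hy', add_zero]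
      | smul a x _ hx => rw [smul_dotProduct, hx, smul_zero]
    exact hspan one hone
  -- last coefficient vanishes
  have hclast : c (Fin.last (k + 1)) = 0 := by
    have h1 : dotProduct one z = c (Fin.last (k + 1)) * Real.sqrt D := by
      rw [← hc, helper_dot_sum]
      rw [Fin.sum_univ_castSucc]
      have hz' : ∀ i : Fin (k + 1),
          dotProduct one (c i.castSucc • y i.castSucc) = 0 := by
        intro i
        rw [hy_lt i.castSucc (by simpa using i.2), dotProduct_smul, dotProduct_comm,
          hve _, smul_zero]
      rw [Finset.sum_congr rfl (fun i _ => hz' i), Finset.sum_const_zero, zero_add]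
      rw [hy_last (Fin.last (k + 1)) (by simp), dotProduct_smul, dotProduct_smul, honeone]
      have hsd : (Real.sqrt D)⁻¹ * (D : ℝ) = Real.sqrt D := by
        rw [inv_mul_eq_div, div_eq_iff hDsqrt.ne']
        exact (Real.mul_self_sqrt (by positivity)).symm
      rw [smul_eq_mul, smul_eq_mul, hsd]
    rw [honez] at h1
    have := h1.symm
    rcases mul_eq_zero.mp this with h | h
    · exact h
    · exact absurd h hDsqrt.ne'
  set a : Fin (k + 1) → ℝ := fun i => c i.castSucc with ha_def
  have hz : z = ∑ i : Fin (k + 1), a i • v (e i) := by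
    rw [← hc, Fin.sum_univ_castSucc, hclast, zero_smul, add_zero]
    refine Finset.sum_congr rfl fun i _ => ?_
    rw [hy_lt i.castSucc (by simpa using i.2)]
    rfl
  set t : ℝ := dotProduct z z with ht_def
  have htpos : 0 < t := helper_dot_self_pos hz0
  set s : ℝ := (Real.sqrt t)⁻¹ with hs_def
  have hss : s * s = t⁻¹ := by
    rw [hs_def, ← mul_inv, Real.mul_self_sqrt htpos.le]
  set x : Fin D → ℝ := s • z with hx_def
  have hxx : dotProduct x x = 1 := by
    rw [hx_def, smul_dotProduct, dotProduct_smul, smul_eq_mul, smul_eq_mul, ← mul_assoc,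
      hss, ← ht_def, inv_mul_cancel₀ htpos.ne']
  refine ⟨x, hxx, ?_⟩
  -- x as combination of v ∘ e
  set b : Fin (k + 1) → ℝ := fun i => s * a i with hb_def
  have hxb : x = ∑ i : Fin (k + 1), b i • v (e i) := by
    rw [hx_def, hz, Finset.smul_sum]
    exact Finset.sum_congr rfl fun i _ => by rw [smul_smul]
  have hbsum : ∑ i : Fin (k + 1), b i * b i = 1 := by
    rw [← helper_dot_sum_sum (fun i => v (e i)) hve' b b, ← hxb, hxx]
  have honex : dotProduct one x = 0 := by
    rw [hx_def, dotProduct_smul, honez, smul_zero]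
  have hWtx : Wt *ᵥ x = 0 := by
    rw [hx_def, mulVec_smul, hzK, smul_zero]
  -- compute (W - Wt) *ᵥ x
  have hq : (W - Wt) *ᵥ x = ∑ j, (σ j * dotProduct (v j) x) • u j := by
    rw [sub_mulVec, hWtx, sub_zero]
    have hW : W *ᵥ x = (W - vecMulVec w one) *ᵥ x + (dotProduct one x) • w := by
      rw [sub_mulVec, helper_vecMulVec_mulVec, sub_add_cancel]
    rw [hW, honex, zero_smul, add_zero, hSVD, helper_sum_mulVec]
    refine Finset.sum_congr rfl fun j _ => ?_
    rw [smul_mulVec, helper_vecMulVec_mulVec, smul_smul]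
  have hqq : dotProduct ((W - Wt) *ᵥ x) ((W - Wt) *ᵥ x)
      = ∑ j, (σ j * dotProduct (v j) x) * (σ j * dotProduct (v j) x) := by
    rw [hq, helper_dot_sum_sum u hu]
  -- v (e i) ⬝ x = b i
  have hbx : ∀ i : Fin (k + 1), dotProduct (v (e i)) x = b i := by
    intro i
    rw [hxb, helper_dot_sum]
    have : ∀ j : Fin (k + 1), dotProduct (v (e i)) (b j • v (e j))
        = if i = j then b j else 0 := by
      intro j
      rw [dotProduct_smul, hve', smul_eq_mul]
      split <;> simp
    rw [Finset.sum_congr rfl fun j _ => this j, Finset.sum_ite_eq]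
    simp
  -- lower bound
  have hlow : σ ⟨k, hk⟩ * σ ⟨k, hk⟩
      ≤ ∑ j, (σ j * dotProduct (v j) x) * (σ j * dotProduct (v j) x) := by
    have hsub : ∑ i : Fin (k + 1),
        (σ (e i) * dotProduct (v (e i)) x) * (σ (e i) * dotProduct (v (e i)) x)
        ≤ ∑ j, (σ j * dotProduct (v j) x) * (σ j * dotProduct (v j) x) := by
      have h1 : ∑ j ∈ Finset.univ.image e,
          (σ j * dotProduct (v j) x) * (σ j * dotProduct (v j) x)
          = ∑ i : Fin (k + 1),
            (σ (e i) * dotProduct (v (e i)) x) * (σ (e i) * dotProduct (v (e i)) x) :=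
        Finset.sum_image (fun i _ j _ hij => he_inj hij)
      rw [← h1]
      exact Finset.sum_le_sum_of_subset_of_nonneg (Finset.subset_univ _)
        (fun j _ _ => mul_self_nonneg _)
    refine le_trans ?_ hsub
    have hterm : ∀ i : Fin (k + 1),
        (σ ⟨k, hk⟩ * σ ⟨k, hk⟩) * (b i * b i)
        ≤ (σ (e i) * dotProduct (v (e i)) x) * (σ (e i) * dotProduct (v (e i)) x) := by
      intro i
      rw [hbx i]
      have hσe : σ ⟨k, hk⟩ ≤ σ (e i) := hσsort (e i) ⟨k, hk⟩ (Nat.lt_succ_iff.mp i.2)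
      calc (σ ⟨k, hk⟩ * σ ⟨k, hk⟩) * (b i * b i)
          ≤ (σ (e i) * σ (e i)) * (b i * b i) := by
            apply mul_le_mul_of_nonneg_right
              (mul_self_le_mul_self hσk.le hσe) (mul_self_nonneg _)
        _ = (σ (e i) * b i) * (σ (e i) * b i) := by ring
    calc σ ⟨k, hk⟩ * σ ⟨k, hk⟩
        = ∑ i : Fin (k + 1), (σ ⟨k, hk⟩ * σ ⟨k, hk⟩) * (b i * b i) := by
          rw [← Finset.mul_sum, hbsum, mul_one]
      _ ≤ _ := Finset.sum_le_sum fun i _ => hterm i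
  rw [← hqq] at hlow
  have h0 : 0 ≤ σ ⟨k, hk⟩ := hσk.le
  rw [Real.le_sqrt h0]
  calc σ ⟨k, hk⟩ ^ 2 = σ ⟨k, hk⟩ * σ ⟨k, hk⟩ := pow_two _
    _ ≤ _ := hlow
  exact le_trans (mul_self_nonneg _) hlow
end

section
/- Let W ∈ R^{m×D} be a matrix such that 1 ∈ Span(W^T) and W^+ 1 ≠ 0. Then w_c := (W^+ 1)/||W^+ 1||^2 satisfies w_c^T W = ||w_c||^2 · 1^T, and W - w_c 1^T has rank at most rank(W) - 1. -/
open Matrix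

/-- The four Penrose conditions characterizing the Moore–Penrose pseudoinverse. -/
def IsMoorePenrose {m D : ℕ} (W : Matrix (Fin m) (Fin D) ℝ)
    (P : Matrix (Fin D) (Fin m) ℝ) : Prop :=
  W * P * W = W ∧ P * W * P = P ∧ (W * P)ᵀ = W * P ∧ (P * W)ᵀ = P * W

lemma vecMul_vecMulVec {m D : ℕ} (x w : Fin m → ℝ) (v : Fin D → ℝ) :
    x ᵥ* vecMulVec w v = (dotProduct x w) • v := by
  funext j
  simp only [vecMul, vecMulVec, dotProduct, of_apply, Pi.smul_apply, smul_eq_mul,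
    Finset.sum_mul]
  exact Finset.sum_congr rfl fun i _ => by ring

lemma vecMulVec_mulVec' {m D : ℕ} (w : Fin m → ℝ) (v z : Fin D → ℝ) :
    vecMulVec w v *ᵥ z = (dotProduct v z) • w := by
  funext i
  simp only [mulVec, vecMulVec, dotProduct, of_apply, Pi.smul_apply, smul_eq_mul,
    Finset.sum_mul]
  exact Finset.sum_congr rfl fun j _ => by ring

/-- Let `W ∈ ℝ^{m×D}` with `1` in its row space and `W⁺1 ≠ 0`
(interpreting `W⁺1` as `(W⁺)ᵀ 1 = 1ᵀ W⁺ ∈ ℝ^m`). Then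
`w_c := W⁺1 / ‖W⁺1‖²` satisfies `w_cᵀ W = ‖w_c‖² 1ᵀ`, and `W - w_c 1ᵀ` has rank
at most `rank(W) - 1`. -/
theorem stmt9 {m D : ℕ} (W : Matrix (Fin m) (Fin D) ℝ)
    (hones : (fun _ => (1 : ℝ)) ∈ Submodule.span ℝ (Set.range W))
    (P : Matrix (Fin D) (Fin m) ℝ) (hP : IsMoorePenrose W P)
    (q w_c : Fin m → ℝ)
    (hq : q = (fun _ => (1 : ℝ)) ᵥ* P) (hq0 : q ≠ 0)
    (hwc : w_c = (dotProduct q q)⁻¹ • q) :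
    w_c ᵥ* W = dotProduct w_c w_c • (fun _ => (1 : ℝ)) ∧
    (W - vecMulVec w_c (fun _ => (1 : ℝ))).rank ≤ W.rank - 1 := by
  obtain ⟨hWPW, hPWP, hWPsym, hPWsym⟩ := hP
  -- 1 is a combination of rows of W
  obtain ⟨c, hc⟩ := (Submodule.mem_span_range_iff_exists_fun ℝ).mp hones
  have hc' : c ᵥ* W = (fun _ => (1 : ℝ)) := by
    funext j
    have := congrFun hc j
    simpa [vecMul, dotProduct, Finset.sum_apply, mul_comm] using this
  -- q ᵥ* W = 1
  have hqW : q ᵥ* W = (fun _ => (1 : ℝ)) := by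
    rw [hq, ← hc', vecMul_vecMul, vecMul_vecMul, ← Matrix.mul_assoc, hWPW, hc']
  have hqq : dotProduct q q ≠ 0 := fun h => hq0 (dotProduct_self_eq_zero.mp h)
  -- first part
  have hwcW : w_c ᵥ* W = (dotProduct q q)⁻¹ • (fun _ => (1 : ℝ)) := by
    rw [hwc, smul_vecMul, hqW]
  have hwcwc : dotProduct w_c w_c = (dotProduct q q)⁻¹ := by
    rw [hwc]
    simp only [dotProduct_smul, smul_dotProduct, smul_eq_mul]
    field_simp
  refine ⟨by rw [hwcW, hwcwc], ?_⟩
  -- q is fixed by right multiplication with W*P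
  have hqWP : q ᵥ* (W * P) = q := by
    rw [← vecMul_vecMul, hqW, hq]
  -- the vector z
  set M := W - vecMulVec w_c (fun _ => (1 : ℝ)) with hM
  set z := P *ᵥ w_c with hz
  have hqwc : dotProduct q w_c = 1 := by
    rw [hwc, dotProduct_smul, smul_eq_mul, inv_mul_cancel₀ hqq]
  have h1z : dotProduct (fun _ => (1 : ℝ)) z = 1 := by
    rw [hz, dotProduct_mulVec, ← hq, hqwc]
  have hWPwc : (W * P) *ᵥ w_c = w_c := by
    rw [hwc, mulVec_smul]
    congr 1
    rw [← hWPsym, mulVec_transpose, hqWP]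
  have hMz : M *ᵥ z = 0 := by
    rw [hM, sub_mulVec, hz, mulVec_mulVec, hWPwc, vecMulVec_mulVec', h1z, one_smul,
      sub_self]
  -- row spaces
  have hsub : LinearMap.range Mᵀ.mulVecLin < LinearMap.range Wᵀ.mulVecLin := by
    constructor
    · rintro v ⟨x, rfl⟩
      have : Mᵀ *ᵥ x = Wᵀ *ᵥ x - (dotProduct x w_c) • (Wᵀ *ᵥ q) := by
        rw [mulVec_transpose, mulVec_transpose, mulVec_transpose, hqW, hM,
          vecMul_sub, _root_.vecMul_vecMulVec]
      simp only [mulVecLin_apply, this]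
      exact Submodule.sub_mem _ (LinearMap.mem_range_self _ x)
        (Submodule.smul_mem _ _ (LinearMap.mem_range_self _ q))
    · intro hle
      have h1 : (fun _ => (1 : ℝ)) ∈ LinearMap.range Wᵀ.mulVecLin :=
        ⟨q, by rw [mulVecLin_apply, mulVec_transpose, hqW]⟩
      obtain ⟨x, hx⟩ := hle h1
      have : dotProduct (fun _ => (1 : ℝ)) z = 0 := by
        rw [← hx, mulVecLin_apply, mulVec_transpose, ← dotProduct_mulVec, hMz,
          dotProduct_zero]
      rw [h1z] at this
      exact one_ne_zero this
  have hlt : Module.finrank ℝ (LinearMap.range Mᵀ.mulVecLin) <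
      Module.finrank ℝ (LinearMap.range Wᵀ.mulVecLin) :=
    Submodule.finrank_lt_finrank_of_lt hsub
  have hrM : Mᵀ.rank = Module.finrank ℝ (LinearMap.range Mᵀ.mulVecLin) := rfl
  have hrW : Wᵀ.rank = Module.finrank ℝ (LinearMap.range Wᵀ.mulVecLin) := rfl
  have : M.rank < W.rank := by
    rw [← rank_transpose M, ← rank_transpose W, hrM, hrW]; exact hlt
  omega
end
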